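/- Temple's inequality: Let A be a bounded self-adjoint operator (or Hermitian matrix) and α < β real numbers such that the spectrum of A has empty intersection with the open interval (α, β). Then for every nonzero vector y, (β − ρ(y))(ρ(y) − α) ≤ ‖r(y)‖²/‖y‖², where ρ(y) = ⟨y,Ay⟩/⟨y,y⟩ and r(y) = Ay − ρ(y)y. -/
import Mathlib


open scoped RealInnerProductSpace
open Submodule

noncomputable section

variable {H : Type*} [NormedAddCommGroup H] [InnerProductSpace ℝ H]

/-- The Rayleigh quotient of `x` with respect to `A`. -/
def rq (A : H →L[ℝ] H) (x : H) : ℝ := ⟪x, A x⟫ / ⟪x, x⟫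

/-- The residual of `x` with respect to `A`. -/
def res (A : H →L[ℝ] H) (x : H) : H := A x - rq A x • x

/-- The acute angle between two vectors. -/
def ang (x y : H) : ℝ := Real.arccos (|⟪x, y⟫| / (‖x‖ * ‖y‖))

lemma cs_aux' (C : H →L[ℝ] H) (hsymm : ∀ x z : H, ⟪C x, z⟫ = ⟪x, C z⟫)
    (hpos : ∀ x : H, 0 ≤ ⟪C x, x⟫) (x : H) : ‖C x‖ ^ 2 ≤ ‖C‖ * ⟪C x, x⟫ := by
  have key : ∀ a b : H, ⟪C a, b⟫ ^ 2 ≤ ⟪C a, a⟫ * ⟪C b, b⟫ := by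
    intro a b
    have h := discrim_le_zero (a := ⟪C b, b⟫) (b := 2 * ⟪C a, b⟫) (c := ⟪C a, a⟫) ?_
    · rw [discrim] at h; nlinarith
    · intro t
      have h0 := hpos (a + t • b)
      have hba : ⟪C b, a⟫ = ⟪C a, b⟫ := by
        rw [hsymm b a, real_inner_comm]
      have e : ⟪C (a + t • b), a + t • b⟫
          = ⟪C a, a⟫ + 2 * t * ⟪C a, b⟫ + t ^ 2 * ⟪C b, b⟫ := by
        rw [map_add, map_smul]
        simp only [inner_add_left, inner_add_right, inner_smul_left, inner_smul_right,
          RCLike.star_def, starRingEnd_apply, star_trivial]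
        rw [hba]; ring
      rw [e] at h0; nlinarith
  rcases eq_or_ne (C x) 0 with h0 | h0
  · rw [h0]; simpa using mul_nonneg (norm_nonneg C) (hpos x)
  · have h1 := key x (C x)
    have h2 : ⟪C x, C x⟫ = ‖C x‖ ^ 2 := real_inner_self_eq_norm_sq _
    have h3 : ⟪C (C x), C x⟫ ≤ ‖C‖ * ‖C x‖ * ‖C x‖ := by
      calc ⟪C (C x), C x⟫ ≤ ‖C (C x)‖ * ‖C x‖ := real_inner_le_norm _ _
        _ ≤ (‖C‖ * ‖C x‖) * ‖C x‖ := by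
            gcongr; exact C.le_opNorm _
  -- conclude
    have hpx := norm_pos_iff.mpr h0
    nlinarith [hpos x, norm_nonneg C, mul_le_mul_of_nonneg_left h3 (hpos x), mul_pos hpx hpx]


lemma spec_gap_bound' [CompleteSpace H] (T : H →L[ℝ] H) (hT : IsSelfAdjoint T) (d : ℝ)
    (hd : 0 ≤ d) (hgap : ∀ t ∈ spectrum ℝ T, t ∉ Set.Ioo (-d) d) (y : H) :
    d ^ 2 * ‖y‖ ^ 2 ≤ ‖T y‖ ^ 2 := by
  by_cases hy : y = 0
  · simp [hy]
  have : Nontrivial H := ⟨⟨y, 0, hy⟩⟩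
  have hsymm : ∀ a b : H, ⟪T a, b⟫ = ⟪a, T b⟫ :=
    fun a b => (ContinuousLinearMap.isSelfAdjoint_iff_isSymmetric.mp hT) a b
  set S : Set ℝ := (fun z : H => ‖T z‖ ^ 2) '' {z | ‖z‖ = 1} with hS
  have hne : S.Nonempty := by
    refine ⟨‖T (‖y‖⁻¹ • y)‖ ^ 2, ⟨‖y‖⁻¹ • y, ?_, rfl⟩⟩
    have : ‖y‖ ≠ 0 := norm_ne_zero_iff.mpr hy
    simp [norm_smul, abs_of_nonneg (inv_nonneg.mpr (norm_nonneg y)), inv_mul_cancel₀ this]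
  have hbdd : BddBelow S := ⟨0, by rintro s ⟨z, -, rfl⟩; positivity⟩
  set m := sInf S with hm
  have hm0 : 0 ≤ m := le_csInf hne (by rintro s ⟨z, -, rfl⟩; positivity)
  have hmle : ∀ z : H, m * ‖z‖ ^ 2 ≤ ‖T z‖ ^ 2 := by
    intro z
    by_cases hz : z = 0
    · simp [hz]
    have hzn : (0:ℝ) < ‖z‖ := norm_pos_iff.mpr hz
    have hu : ‖(‖z‖⁻¹ • z)‖ = 1 := by
      simp [norm_smul, abs_of_nonneg (inv_nonneg.mpr (norm_nonneg z)), inv_mul_cancel₀ hzn.ne']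
    have h1 : m ≤ ‖T (‖z‖⁻¹ • z)‖ ^ 2 := csInf_le hbdd ⟨_, hu, rfl⟩
    rw [map_smul, norm_smul, norm_inv, norm_norm, mul_pow] at h1
    have h2 : (‖z‖⁻¹) ^ 2 * ‖z‖ ^ 2 = 1 := by field_simp
    nlinarith [mul_le_mul_of_nonneg_right h1 (sq_nonneg ‖z‖)]
  suffices hdm : d ^ 2 ≤ m by
    calc d ^ 2 * ‖y‖ ^ 2 ≤ m * ‖y‖ ^ 2 := by gcongr
      _ ≤ ‖T y‖ ^ 2 := hmle y
  by_contra hcon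
  push_neg at hcon
  set s := Real.sqrt m with hsdef
  have hs2 : s ^ 2 = m := Real.sq_sqrt hm0
  have hs0 : 0 ≤ s := Real.sqrt_nonneg m
  have hd0 : 0 < d := by nlinarith
  have hsd : s < d := by nlinarith
  have h1 : s ∉ spectrum ℝ T := fun h => hgap s h ⟨by linarith, hsd⟩
  have h2 : -s ∉ spectrum ℝ T := fun h => hgap (-s) h ⟨by linarith, by linarith⟩
  rw [spectrum.notMem_iff] at h1 h2
  have hCunit : IsUnit ((algebraMap ℝ (H →L[ℝ] H) s - T) * (algebraMap ℝ (H →L[ℝ] H) (-s) - T)) :=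
    h1.mul h2
  have hfact : (algebraMap ℝ (H →L[ℝ] H) s - T) * (algebraMap ℝ (H →L[ℝ] H) (-s) - T)
      = T * T - algebraMap ℝ (H →L[ℝ] H) m := by
    ext x
    simp only [ContinuousLinearMap.mul_apply, ContinuousLinearMap.sub_apply,
      Algebra.algebraMap_eq_smul_one, ContinuousLinearMap.smul_apply,
      ContinuousLinearMap.one_apply, map_sub, map_smul]
    rw [← hs2]
    module
  rw [hfact] at hCunit
  set C : H →L[ℝ] H := T * T - algebraMap ℝ (H →L[ℝ] H) m with hCdef
  have hCapp : ∀ x : H, C x = T (T x) - m • x := by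
    intro x
    simp [hCdef, Algebra.algebraMap_eq_smul_one, ContinuousLinearMap.sub_apply,
      ContinuousLinearMap.mul_apply]
  have hCform : ∀ x : H, ⟪C x, x⟫ = ‖T x‖ ^ 2 - m * ‖x‖ ^ 2 := by
    intro x
    rw [hCapp, inner_sub_left, real_inner_smul_left, hsymm,
      real_inner_self_eq_norm_sq, real_inner_self_eq_norm_sq]
  have hCpos : ∀ x : H, 0 ≤ ⟪C x, x⟫ := by
    intro x; rw [hCform]; linarith [hmle x]
  have hCsymm : ∀ a b : H, ⟪C a, b⟫ = ⟪a, C b⟫ := by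
    intro a b
    rw [hCapp, hCapp, inner_sub_left, inner_sub_right, hsymm, hsymm,
      real_inner_smul_left, real_inner_smul_right]
  -- bounded below via the inverse
  have hVle : ∀ z : H, ‖z‖ ≤ ‖(↑hCunit.unit⁻¹ : H →L[ℝ] H)‖ * ‖C z‖ := by
    intro z
    have h := congrArg (fun f : H →L[ℝ] H => f z) hCunit.unit.inv_mul
    simp only [ContinuousLinearMap.mul_def] at h
    have h' : (↑hCunit.unit⁻¹ : H →L[ℝ] H) ((↑hCunit.unit : H →L[ℝ] H) z) = z := by
      simpa [ContinuousLinearMap.mul_apply] using h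
    rw [IsUnit.unit_spec] at h'
    calc ‖z‖ = ‖(↑hCunit.unit⁻¹ : H →L[ℝ] H) (C z)‖ := by rw [h']
      _ ≤ ‖(↑hCunit.unit⁻¹ : H →L[ℝ] H)‖ * ‖C z‖ := ContinuousLinearMap.le_opNorm _ _
  set V : ℝ := ‖(↑hCunit.unit⁻¹ : H →L[ℝ] H)‖ with hVdef
  set K : ℝ := V ^ 2 * ‖C‖ with hKdef
  have hK0 : 0 ≤ K := by positivity
  have hε : (0:ℝ) < 1 / (K + 1) := by positivity
  obtain ⟨a, ⟨z, hz1, rfl⟩, ha⟩ :=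
    exists_lt_of_csInf_lt hne (show m < m + 1 / (K + 1) by linarith)
  have hz1' : ‖z‖ = 1 := hz1
  have ha' : ‖T z‖ ^ 2 < m + 1 / (K + 1) := ha
  have hq : ⟪C z, z⟫ < 1 / (K + 1) := by
    rw [hCform, hz1', one_pow, mul_one]; linarith
  have hcs := cs_aux' C hCsymm hCpos z
  have h1z : 1 ≤ V * ‖C z‖ := by have := hVle z; rwa [hz1'] at this
  have hfin : 1 ≤ K * ⟪C z, z⟫ := by
    nlinarith [norm_nonneg (C z), norm_nonneg C, hCpos z]
  have hlt : K * (1 / (K + 1)) < 1 := by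
    rw [mul_one_div]
    exact (div_lt_one (by linarith)).mpr (by linarith)
  have hKq : K * ⟪C z, z⟫ ≤ K * (1 / (K + 1)) :=
    mul_le_mul_of_nonneg_left hq.le hK0
  linarith

/-- Temple's inequality: if the spectrum of a bounded self-adjoint `A` does not meet the
open interval `(α, β)`, then for every nonzero `y`:
`(β − ρ(y))(ρ(y) − α) ≤ ‖r(y)‖²/‖y‖²`. -/
theorem stmt_17 [CompleteSpace H] (A : H →L[ℝ] H) (hA : IsSelfAdjoint A)
    (α β : ℝ) (hαβ : α < β) (hgap : spectrum ℝ A ∩ Set.Ioo α β = ∅)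
    (y : H) (hy : y ≠ 0) :
    (β - rq A y) * (rq A y - α) ≤ ‖res A y‖ ^ 2 / ‖y‖ ^ 2 := by
  set μ : ℝ := (α + β) / 2 with hμ
  set d : ℝ := (β - α) / 2 with hd
  have hd0 : 0 < d := by rw [hd]; linarith
  set T : H →L[ℝ] H := A - algebraMap ℝ (H →L[ℝ] H) μ with hT
  have hTsa : IsSelfAdjoint T := by
    refine hA.sub ?_
    simp [IsSelfAdjoint, Algebra.algebraMap_eq_smul_one, star_smul]
  have hgap' : ∀ t ∈ spectrum ℝ T, t ∉ Set.Ioo (-d) d := by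
    intro t ht hio
    rw [hT, ← spectrum.sub_singleton_eq] at ht
    obtain ⟨u, hu, v, hv, huv⟩ := Set.mem_sub.mp ht
    rw [Set.mem_singleton_iff] at hv
    subst hv
    obtain ⟨h1, h2⟩ := hio
    refine Set.eq_empty_iff_forall_notMem.mp hgap u ⟨hu, ?_, ?_⟩
    · linarith
    · linarith
  have hbound := spec_gap_bound' T hTsa d hd0.le hgap' y
  have hn : (0:ℝ) < ‖y‖ ^ 2 := pow_pos (norm_pos_iff.mpr hy) 2
  have hinner : ⟪y, y⟫ = ‖y‖ ^ 2 := real_inner_self_eq_norm_sq y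
  have hρ : ⟪y, A y⟫ = rq A y * ‖y‖ ^ 2 := by
    rw [rq, hinner]; field_simp
  have hAyy : ⟪A y, y⟫ = rq A y * ‖y‖ ^ 2 := by rw [real_inner_comm]; exact hρ
  have hTy : T y = A y - μ • y := by
    rw [hT]
    simp [ContinuousLinearMap.sub_apply, Algebra.algebraMap_eq_smul_one]
  have hTy2 : ‖T y‖ ^ 2 = ‖A y‖ ^ 2 - 2 * μ * (rq A y * ‖y‖ ^ 2) + μ ^ 2 * ‖y‖ ^ 2 := by
    rw [hTy, norm_sub_sq_real, real_inner_smul_right, hAyy, norm_smul, mul_pow]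
    rw [Real.norm_eq_abs, sq_abs]
    ring
  have hr2 : ‖res A y‖ ^ 2
      = ‖A y‖ ^ 2 - 2 * rq A y * (rq A y * ‖y‖ ^ 2) + (rq A y) ^ 2 * ‖y‖ ^ 2 := by
    rw [res, norm_sub_sq_real, real_inner_smul_right, hAyy, norm_smul, mul_pow, Real.norm_eq_abs, sq_abs]
    ring
  rw [le_div_iff₀ hn]
  simp only [hμ] at hTy2
  simp only [hd] at hbound
  nlinarith [hbound, hTy2, hr2]
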